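/- Let μ, β, ν, θ, k, γ > 0 and δ ∈ [0,1), set R₀ = β/(ν+μ), p_c = 1 − 1/R₀, γ_c = p_c(p_c − δ), and assume γ_c < γ < 1 − δ. Let S, I, p : [0,∞) → ℝ be differentiable functions satisfying, for all τ ≥ 0, S′(τ) = μ(1−p(τ)) − μS(τ) − βS(τ)I(τ), I′(τ) = βS(τ)I(τ) − (ν+μ)I(τ), p′(τ) = k(p(τ)(1−p(τ))(δ + θβS(τ)I(τ) − p(τ)) + γ(1−p(τ))), together with S(τ) ≥ 0, I(τ) ≥ 0 and p(τ) ∈ [0,1] for all τ ≥ 0. Then liminf of p(τ) as τ → ∞ is at least p⁰ = (δ + √(δ² + 4γ))/2, and I(τ) → 0 as τ → ∞. -/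

import Mathlib

open Filter

/-- Linear growth lemma: if `f' ≥ c` on `[a,b]` then `f b ≥ f a + c (b-a)`. -/
lemma sir_lin_growth (f f' : ℝ → ℝ) (a b c : ℝ) (hab : a ≤ b)
    (hf : ∀ τ ∈ Set.Icc a b, HasDerivAt f (f' τ) τ)
    (hc : ∀ τ ∈ Set.Icc a b, c ≤ f' τ) :
    f a + c * (b - a) ≤ f b := by
  have key : MonotoneOn (fun τ => f τ - c * τ) (Set.Icc a b) := by
    apply monotoneOn_of_deriv_nonneg (convex_Icc a b)
    · exact ContinuousOn.sub
        (fun x hx => ((hf x hx).continuousAt).continuousWithinAt)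
        (Continuous.continuousOn (by continuity))
    · intro x hx
      have hx' : x ∈ Set.Icc a b := interior_subset hx
      exact (((hf x hx').sub ((hasDerivAt_id x).const_mul c)).differentiableAt).differentiableWithinAt
    · intro x hx
      rw [interior_Icc] at hx
      have hx' : x ∈ Set.Icc a b := Set.mem_Icc_of_Ioo hx
      have hd : HasDerivAt (fun τ => f τ - c * τ) (f' x - c * 1) x :=
        (hf x hx').sub ((hasDerivAt_id x).const_mul c)
      rw [hd.deriv]
      linarith [hc x hx']
  have := key (Set.left_mem_Icc.2 hab) (Set.right_mem_Icc.2 hab) hab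
  simp only at this
  linarith

/-- Exponential decay lemma: if `f' ≤ -c f` on `[a,∞)` then
`f b ≤ f a exp (-c (b-a))`. -/
lemma sir_exp_decay (f f' : ℝ → ℝ) (a c : ℝ)
    (hf : ∀ τ ∈ Set.Ici a, HasDerivAt f (f' τ) τ)
    (hc : ∀ τ ∈ Set.Ici a, f' τ ≤ -c * f τ) :
    ∀ b ∈ Set.Ici a, f b ≤ f a * Real.exp (-c * (b - a)) := by
  intro b hb
  have key : AntitoneOn (fun τ => f τ * Real.exp (c * τ)) (Set.Ici a) := by
    apply antitoneOn_of_deriv_nonpos (convex_Ici a)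
    · exact ContinuousOn.mul
        (fun x hx => ((hf x hx).continuousAt).continuousWithinAt)
        (Continuous.continuousOn (by continuity))
    · intro x hx
      have hx' : x ∈ Set.Ici a := interior_subset hx
      exact (((hf x hx').mul (((hasDerivAt_id x).const_mul c).exp)).differentiableAt).differentiableWithinAt
    · intro x hx
      rw [interior_Ici] at hx
      have hx' : x ∈ Set.Ici a := Set.mem_Ici.2 (le_of_lt (Set.mem_Ioi.1 hx))
      have hd : HasDerivAt (fun τ => f τ * Real.exp (c * τ))
          (f' x * Real.exp (c * x) + f x * (Real.exp (c * x) * (c * 1))) x :=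
        (hf x hx').mul (((hasDerivAt_id x).const_mul c).exp)
      rw [hd.deriv]
      have h1 := hc x hx'
      have h2 : (0:ℝ) < Real.exp (c * x) := Real.exp_pos _
      nlinarith
  have h := key Set.self_mem_Ici hb hb
  simp only at h
  have h2 : f b ≤ f a * Real.exp (c * a) / Real.exp (c * b) :=
    (le_div_iff₀ (Real.exp_pos _)).2 h
  have h3 : f a * Real.exp (c * a) / Real.exp (c * b)
      = f a * Real.exp (-c * (b - a)) := by
    rw [mul_div_assoc, ← Real.exp_sub]
    ring_nf
  linarith [h3 ▸ h2]

/-- Forward invariance: if `f' > 0` wherever `f < q` (on `[0,∞)`), then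
`f ≥ q` is forward invariant. -/
lemma sir_invariance (f f' : ℝ → ℝ) (q a : ℝ) (ha : 0 ≤ a)
    (hf : ∀ τ ∈ Set.Ici (0:ℝ), HasDerivAt f (f' τ) τ)
    (hpos : ∀ τ, 0 ≤ τ → f τ < q → 0 < f' τ)
    (hfa : q ≤ f a) : ∀ b, a ≤ b → q ≤ f b := by
  intro b hab
  by_contra hcon
  push_neg at hcon
  have hcont : ContinuousOn f (Set.Icc a b) := fun x hx =>
    ((hf x (le_trans ha hx.1)).continuousAt).continuousWithinAt
  set K := Set.Icc a b ∩ f ⁻¹' (Set.Ici q) with hK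
  have hKne : K.Nonempty := ⟨a, Set.left_mem_Icc.2 hab, hfa⟩
  have hKclosed : IsClosed K :=
    hcont.preimage_isClosed_of_isClosed isClosed_Icc isClosed_Ici
  have hKcpt : IsCompact K :=
    (isCompact_Icc (a := a) (b := b)).of_isClosed_subset hKclosed
      Set.inter_subset_left
  obtain ⟨hsmem, hsq⟩ := hKcpt.sSup_mem hKne
  set s := sSup K with hs
  have hsb : s ≠ b := fun h => absurd (h ▸ hsq) (not_le.2 hcon)
  have hslt : s < b := lt_of_le_of_ne hsmem.2 hsb
  have hlt : ∀ x ∈ Set.Ioo s b, f x < q := by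
    intro x hx
    by_contra hge
    push_neg at hge
    have : x ∈ K := ⟨⟨le_trans hsmem.1 hx.1.le, hx.2.le⟩, hge⟩
    exact absurd (le_csSup hKcpt.bddAbove this) (not_le.2 hx.1)
  have hmono : StrictMonoOn f (Set.Icc s b) := by
    apply strictMonoOn_of_deriv_pos (convex_Icc s b)
    · exact fun x hx =>
        ((hf x (le_trans (le_trans ha hsmem.1) hx.1)).continuousAt).continuousWithinAt
    · intro x hx
      rw [interior_Icc] at hx
      have hx0 : (0:ℝ) ≤ x := le_trans (le_trans ha hsmem.1) hx.1.le
      rw [(hf x hx0).deriv]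
      exact hpos x hx0 (hlt x hx)
  have h1 := hmono (Set.left_mem_Icc.2 hslt.le) (Set.right_mem_Icc.2 hslt.le) hslt
  have h2 : q ≤ f s := hsq
  linarith

set_option maxHeartbeats 1000000 in
/-- Global attractivity of the disease-free equilibrium `E⁰` of the SIR
model with evolutionary vaccination game: if `γ_c < γ < 1 − δ`, then along
every solution `liminf p ≥ p⁰ = (δ + √(δ² + 4γ))/2` and `I(τ) → 0`. -/
theorem disease_free_global_attractivity (μ β ν θ k γ δ : ℝ)
    (hμ : 0 < μ) (hβ : 0 < β) (hν : 0 < ν) (hθ : 0 < θ) (hk : 0 < k)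
    (hγ : 0 < γ) (hδ : δ ∈ Set.Ico (0 : ℝ) 1)
    (hγlow : (1 - (ν + μ) / β) * ((1 - (ν + μ) / β) - δ) < γ)
    (hγhigh : γ < 1 - δ)
    (S I p : ℝ → ℝ)
    (hS : ∀ τ : ℝ, 0 ≤ τ →
      HasDerivAt S (μ * (1 - p τ) - μ * S τ - β * S τ * I τ) τ)
    (hI : ∀ τ : ℝ, 0 ≤ τ →
      HasDerivAt I (β * S τ * I τ - (ν + μ) * I τ) τ)
    (hp : ∀ τ : ℝ, 0 ≤ τ →
      HasDerivAt p
        (k * (p τ * (1 - p τ) * (δ + θ * (β * S τ * I τ) - p τ)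
          + γ * (1 - p τ))) τ)
    (hSnn : ∀ τ : ℝ, 0 ≤ τ → 0 ≤ S τ)
    (hInn : ∀ τ : ℝ, 0 ≤ τ → 0 ≤ I τ)
    (hpmem : ∀ τ : ℝ, 0 ≤ τ → p τ ∈ Set.Icc (0 : ℝ) 1) :
    (δ + Real.sqrt (δ ^ 2 + 4 * γ)) / 2 ≤ liminf p atTop ∧
    Tendsto I atTop (nhds 0) := by
  obtain ⟨hδ0, hδ1⟩ := hδ
  set s0 := Real.sqrt (δ ^ 2 + 4 * γ) with hs0def
  have hs0nn : 0 ≤ s0 := Real.sqrt_nonneg _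
  have hs0sq : s0 ^ 2 = δ ^ 2 + 4 * γ := Real.sq_sqrt (by positivity)
  have hδs0 : δ < s0 := by nlinarith [hs0sq, hs0nn, mul_nonneg hδ0 hs0nn]
  set p0 : ℝ := (δ + s0) / 2 with hp0def
  have hp0δ : δ < p0 := by rw [hp0def]; linarith
  have hp0pos : 0 < p0 := lt_of_le_of_lt hδ0 hp0δ
  have hp0sq : p0 ^ 2 = δ * p0 + γ := by rw [hp0def]; linear_combination hs0sq / 4
  have hfac : (p0 - 1) * (p0 + 1 - δ) < 0 := by nlinarith [hp0sq]
  have hp0lt1 : p0 < 1 := by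
    by_contra h
    push_neg at h
    nlinarith [mul_nonneg (by linarith : (0:ℝ) ≤ p0 - 1)
      (by linarith : (0:ℝ) ≤ p0 + 1 - δ)]
  -- the threshold: p_c < p0, hence β (1 - p0) < ν + μ
  have hpc : 1 - (ν + μ) / β < p0 := by
    by_contra h
    push_neg at h
    set pc := 1 - (ν + μ) / β
    have h2 : (pc - p0) * (pc + p0 - δ) ≥ 0 :=
      mul_nonneg (by linarith) (by linarith)
    nlinarith [hp0sq]
  have hσ : 0 < ν + μ - β * (1 - p0) := by
    have h1 : 1 - p0 < (ν + μ) / β := by linarith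
    have := (lt_div_iff₀ hβ).1 h1
    linarith
  set σ := ν + μ - β * (1 - p0) with hσdef
  -- Part 1 machinery: for every 0 ≤ q < p0, eventually p ≥ q
  have key : ∀ q, 0 ≤ q → q < p0 → ∃ T, 0 ≤ T ∧ ∀ τ, T ≤ τ → q ≤ p τ := by
    intro q hq0 hq1
    set D : ℝ → ℝ := fun τ =>
      k * (p τ * (1 - p τ) * (δ + θ * (β * S τ * I τ) - p τ) + γ * (1 - p τ))
      with hDdef
    set c := k * ((1 - q) * ((p0 - δ) * (p0 - q))) with hcdef
    have hcpos : 0 < c := by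
      apply mul_pos hk
      apply mul_pos (by linarith)
      exact mul_pos (by linarith) (by linarith)
    have hDlb : ∀ τ, 0 ≤ τ → p τ ≤ q → c ≤ D τ := by
      intro τ hτ hpq
      obtain ⟨hm0, hm1⟩ := hpmem τ hτ
      have hSI : 0 ≤ β * S τ * I τ :=
        mul_nonneg (mul_nonneg hβ.le (hSnn τ hτ)) (hInn τ hτ)
      have hθSI : 0 ≤ p τ * (θ * (β * S τ * I τ)) :=
        mul_nonneg hm0 (mul_nonneg hθ.le hSI)
      -- γ + δ p - p² = (p + p0 - δ)(p0 - p) ≥ (p0 - δ)(p0 - q)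
      have hg : (p0 - δ) * (p0 - q) ≤ γ + δ * p τ - (p τ) ^ 2 := by
        nlinarith [hp0sq, mul_nonneg hm0 (by linarith : (0:ℝ) ≤ p0 - p τ),
          mul_nonneg (by linarith : (0:ℝ) ≤ p0 - δ) (by linarith : (0:ℝ) ≤ q - p τ)]
      have h1q : (1 : ℝ) - q ≤ 1 - p τ := by linarith
      have hfac : (1 - q) * ((p0 - δ) * (p0 - q)) ≤
          (1 - p τ) * (γ + δ * p τ - (p τ) ^ 2 + p τ * (θ * (β * S τ * I τ))) := by
        have hA : (0:ℝ) ≤ (p0 - δ) * (p0 - q) :=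
          mul_nonneg (by linarith) (by linarith)
        have hB : (p0 - δ) * (p0 - q) ≤
            γ + δ * p τ - (p τ) ^ 2 + p τ * (θ * (β * S τ * I τ)) := by linarith
        calc (1 - q) * ((p0 - δ) * (p0 - q))
            ≤ (1 - p τ) * ((p0 - δ) * (p0 - q)) :=
              mul_le_mul_of_nonneg_right h1q hA
          _ ≤ (1 - p τ) * (γ + δ * p τ - (p τ) ^ 2 + p τ * (θ * (β * S τ * I τ))) :=
              mul_le_mul_of_nonneg_left hB (by linarith)
      have hexp : D τ = k * ((1 - p τ) *
          (γ + δ * p τ - (p τ) ^ 2 + p τ * (θ * (β * S τ * I τ)))) := by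
        rw [hDdef]; ring
      rw [hcdef, hexp]
      exact mul_le_mul_of_nonneg_left hfac hk.le
    have hreach : ∃ T, 0 ≤ T ∧ q ≤ p T := by
      by_contra h
      push_neg at h
      set b := 2 / c with hbdef
      have hb : (0:ℝ) ≤ b := by positivity
      have hgrow := sir_lin_growth p D 0 b c hb
        (fun τ hτ => hp τ hτ.1)
        (fun τ hτ => hDlb τ hτ.1 (le_of_lt (h τ hτ.1)))
      have h0 := (hpmem 0 le_rfl).1
      have hb1 := (hpmem b hb).2
      have hcb : c * (b - 0) = 2 := by
        rw [hbdef]; field_simp; ring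
      linarith
    obtain ⟨T, hT0, hTq⟩ := hreach
    refine ⟨T, hT0, sir_invariance p D q T hT0 (fun τ hτ => hp τ hτ) ?_ hTq⟩
    intro τ hτ hlt
    have := hDlb τ hτ (le_of_lt hlt)
    linarith
  -- Part 1: liminf bound
  have hbdd : IsBoundedUnder (· ≤ ·) atTop p :=
    ⟨1, eventually_atTop.2 ⟨0, fun τ hτ => (hpmem τ hτ).2⟩⟩
  have hcobdd : IsCoboundedUnder (· ≥ ·) atTop p := hbdd.isCoboundedUnder_ge
  have hlimq : ∀ q, 0 ≤ q → q < p0 → q ≤ liminf p atTop := by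
    intro q hq0 hq1
    obtain ⟨T, hT0, hT⟩ := key q hq0 hq1
    exact le_liminf_of_le hcobdd (eventually_atTop.2 ⟨T, hT⟩)
  have part1 : p0 ≤ liminf p atTop := by
    apply le_of_forall_sub_le
    intro ε hε
    have hq : max 0 (p0 - ε) < p0 := max_lt hp0pos (by linarith)
    have := hlimq (max 0 (p0 - ε)) (le_max_left _ _) hq
    exact le_trans (le_max_right _ _) this
  refine ⟨part1, ?_⟩
  -- Part 2: I → 0
  set ε := min (p0 / 2) (σ / (4 * β)) with hεdef
  have hεpos : 0 < ε := lt_min (by linarith) (by positivity)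
  have hε1 : ε ≤ p0 / 2 := min_le_left _ _
  have hε2 : ε ≤ σ / (4 * β) := min_le_right _ _
  obtain ⟨T, hT0, hT⟩ := key (p0 - ε) (by linarith) (by linarith)
  -- S decay towards 1 - p0 + ε
  have hSdecay := sir_exp_decay (fun τ => S τ - (1 - p0 + ε))
    (fun τ => μ * (1 - p τ) - μ * S τ - β * S τ * I τ) T μ
    (fun τ hτ => (hS τ (le_trans hT0 hτ)).sub_const _)
    (by
      intro τ hτ
      have hτ0 : (0:ℝ) ≤ τ := le_trans hT0 hτ
      have h1 := hT τ hτ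
      have hSI : 0 ≤ β * S τ * I τ :=
        mul_nonneg (mul_nonneg hβ.le (hSnn τ hτ0)) (hInn τ hτ0)
      have h2 : μ * (1 - p τ) ≤ μ * (1 - (p0 - ε)) :=
        mul_le_mul_of_nonneg_left (by linarith) hμ.le
      linarith)
  have htendS : Tendsto (fun τ => (S T - (1 - p0 + ε)) * Real.exp (-μ * (τ - T)))
      atTop (nhds 0) := by
    have h1 : Tendsto (fun τ : ℝ => τ - T) atTop atTop := by
      simpa [sub_eq_add_neg] using tendsto_atTop_add_const_right atTop (-T) tendsto_id
    have h2 : Tendsto (fun τ : ℝ => -μ * (τ - T)) atTop atBot :=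
      h1.const_mul_atTop_of_neg (by linarith)
    have h3 := Real.tendsto_exp_atBot.comp h2
    have h4 := h3.const_mul (S T - (1 - p0 + ε))
    simpa using h4
  have hev : ∀ᶠ τ in atTop, (S T - (1 - p0 + ε)) * Real.exp (-μ * (τ - T)) < ε :=
    htendS.eventually_lt_const hεpos
  obtain ⟨T', hT'⟩ := eventually_atTop.1 hev
  set T2 := max T T' with hT2def
  have hT2T : T ≤ T2 := le_max_left _ _
  have hT2nn : 0 ≤ T2 := le_trans hT0 hT2T
  have hSb : ∀ τ, T2 ≤ τ → S τ ≤ 1 - p0 + 2 * ε := by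
    intro τ hτ
    have h1 := hSdecay τ (le_trans hT2T hτ)
    have h2 := hT' τ (le_trans (le_max_right _ _) hτ)
    linarith
  -- I decay
  have hβε : β * ε ≤ σ / 4 := by
    have h1 : β * ε ≤ β * (σ / (4 * β)) := mul_le_mul_of_nonneg_left hε2 hβ.le
    have h2 : β * (σ / (4 * β)) = σ / 4 := by field_simp
    linarith
  have hIdecay := sir_exp_decay I
    (fun τ => β * S τ * I τ - (ν + μ) * I τ) T2 (σ / 2)
    (fun τ hτ => hI τ (le_trans hT2nn hτ))
    (by
      intro τ hτ
      have hτ0 : (0:ℝ) ≤ τ := le_trans hT2nn hτ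
      have h1 := hSb τ hτ
      have h2 := hInn τ hτ0
      have hS2 : β * S τ ≤ ν + μ - σ / 2 := by
        have := mul_le_mul_of_nonneg_left h1 hβ.le
        have hexp : β * (1 - p0 + 2 * ε) = β * (1 - p0) + 2 * (β * ε) := by ring
        rw [hexp] at this
        rw [hσdef] at hβε ⊢
        linarith
      have h3 : β * S τ * I τ ≤ (ν + μ - σ / 2) * I τ :=
        mul_le_mul_of_nonneg_right hS2 h2
      linarith)
  have htendI : Tendsto (fun τ => I T2 * Real.exp (-(σ / 2) * (τ - T2)))
      atTop (nhds 0) := by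
    have h1 : Tendsto (fun τ : ℝ => τ - T2) atTop atTop := by
      simpa [sub_eq_add_neg] using tendsto_atTop_add_const_right atTop (-T2) tendsto_id
    have h2 : Tendsto (fun τ : ℝ => -(σ / 2) * (τ - T2)) atTop atBot :=
      h1.const_mul_atTop_of_neg (by linarith)
    have h3 := Real.tendsto_exp_atBot.comp h2
    have h4 := h3.const_mul (I T2)
    simpa using h4
  apply tendsto_of_tendsto_of_tendsto_of_le_of_le' tendsto_const_nhds htendI
  · exact eventually_atTop.2 ⟨max 0 T2,
      fun τ hτ => hInn τ (le_trans (le_max_left _ _) hτ)⟩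
  · exact eventually_atTop.2 ⟨T2, fun τ hτ => hIdecay τ hτ⟩
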